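/- Let M ⊆ ℝ^N be a non-empty compact set such that for every admissible array (k; s; i₁,…,i_s) (meaning 0 < k < N, s ≥ 1, all i_j ≥ 2, ∑(i_j−1) ≥ k+1), every tuple of pairwise distinct points (A¹₁,…,A¹_{i₁};…;Aˢ₁,…,Aˢ_{i_s}) in M has difference vectors {Aʲ_m − Aʲ₁} spanning a subspace of dimension at least k+1. Then for every non-zero proper linear subspace H of ℝ^N, the orthogonal projection p_H : ℝ^N → H^⊥ restricted to M has only finitely many non-degenerate fibers. -/

import Mathlib

noncomputable def projFiber {N : ℕ} (H : Submodule ℝ (EuclideanSpace ℝ (Fin N)))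
    (M : Set (EuclideanSpace ℝ (Fin N))) (A : EuclideanSpace ℝ (Fin N)) :
    Set (EuclideanSpace ℝ (Fin N)) :=
  {B ∈ M | Hᗮ.orthogonalProjectionOnto B = Hᗮ.orthogonalProjectionOnto A}

theorem stmt10 (N : ℕ) (M : Set (EuclideanSpace ℝ (Fin N)))
    (hMne : M.Nonempty) (hMc : IsCompact M)
    (hyp : ∀ (k s : ℕ) (i : Fin s → ℕ), ∀ (_ : 0 < k) (_ : k < N) (_ : 1 ≤ s) (hi : ∀ j, 2 ≤ i j) (_ : k + 1 ≤ ∑ j, (i j - 1)),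
      ∀ A : (j : Fin s) → Fin (i j) → EuclideanSpace ℝ (Fin N),
        (∀ j m, A j m ∈ M) →
        Function.Injective (fun p : Σ j : Fin s, Fin (i j) => A p.1 p.2) →
        k + 1 ≤ Module.finrank ℝ (Submodule.span ℝ
          {v | ∃ (j : Fin s) (m : Fin (i j)), m ≠ (⟨0, by have := hi j; omega⟩ : Fin (i j)) ∧
            v = A j m - A j ⟨0, by have := hi j; omega⟩})) :
    ∀ H : Submodule ℝ (EuclideanSpace ℝ (Fin N)), H ≠ ⊥ → H ≠ ⊤ →
      {F : Set (EuclideanSpace ℝ (Fin N)) | ∃ A ∈ M, F = projFiber H M A ∧ F.Nontrivial}.Finite := by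
  intro H hbot htop
  by_contra hinf
  rw [← Set.not_infinite, not_not] at hinf
  set k := Module.finrank ℝ H with hk
  have hk0 : 0 < k := Module.finrank_pos_iff.mpr (Submodule.nontrivial_iff_ne_bot.mpr hbot)
  have hkN : k < N := by
    have := Submodule.finrank_lt htop
    simpa using this
  -- choose k+1 distinct fibers
  let e := Set.Infinite.natEmbedding _ hinf
  set f : Fin (k + 1) → {F : Set (EuclideanSpace ℝ (Fin N)) | ∃ A ∈ M, F = projFiber H M A ∧ F.Nontrivial} :=
    fun j => e j.val with hf
  have hfinj : Function.Injective f := fun a b hab => by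
    have := e.injective hab
    exact Fin.val_injective this
  -- pick two distinct points in each fiber
  have hpts : ∀ j : Fin (k + 1), ∃ P : Fin 2 → EuclideanSpace ℝ (Fin N),
      P 0 ≠ P 1 ∧ ∀ m, P m ∈ (f j : Set (EuclideanSpace ℝ (Fin N))) := by
    intro j
    obtain ⟨A, hA, hFeq, x, hx, y, hy, hxy⟩ := (f j).2
    exact ⟨![x, y], by simpa using hxy, by intro m; fin_cases m <;> simpa⟩
  choose P hPne hPmem using hpts
  -- facts about fibers
  have hmemM : ∀ j m, P j m ∈ M := by
    intro j m
    obtain ⟨A, hA, hFeq, _⟩ := (f j).2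
    have := hPmem j m
    rw [hFeq] at this
    exact this.1
  have hsame : ∀ j m m', Hᗮ.orthogonalProjectionOnto (P j m) = Hᗮ.orthogonalProjectionOnto (P j m') := by
    intro j m m'
    obtain ⟨A, hA, hFeq, _⟩ := (f j).2
    have h1 := hPmem j m; have h2 := hPmem j m'
    rw [hFeq] at h1 h2
    exact h1.2.trans h2.2.symm
  have hfibeq : ∀ j x, x ∈ (f j : Set (EuclideanSpace ℝ (Fin N))) →
      (f j : Set (EuclideanSpace ℝ (Fin N))) = projFiber H M x := by
    intro j x hx
    obtain ⟨A, hA, hFeq, _⟩ := (f j).2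
    rw [hFeq] at hx ⊢
    ext y
    simp only [projFiber, Set.mem_setOf_eq, Set.mem_sep_iff]
    exact ⟨fun ⟨h1, h2⟩ => ⟨h1, h2.trans hx.2.symm⟩, fun ⟨h1, h2⟩ => ⟨h1, h2.trans hx.2⟩⟩
  -- injectivity of the point family
  have hinj : Function.Injective (fun p : Σ _ : Fin (k + 1), Fin 2 => P p.1 p.2) := by
    rintro ⟨j, m⟩ ⟨j', m'⟩ h
    simp only at h
    by_cases hjj : j = j'
    · subst hjj
      by_contra hne
      have hmm : m ≠ m' := fun hc => hne (by rw [hc])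
      apply hPne j
      fin_cases m <;> fin_cases m' <;>
        first
        | exact absurd rfl hmm
        | exact h
        | exact h.symm
    · exfalso
      apply hjj
      apply hfinj
      apply Subtype.ext
      rw [hfibeq j _ (hPmem j m), hfibeq j' _ (hPmem j' m'), h]
  -- apply hypothesis
  have key := hyp k (k + 1) (fun _ => 2) hk0 hkN (by omega) (fun _ => le_refl 2)
    (by simp) P (fun j m => hmemM j m) hinj
  -- but span is inside H
  have hsub : Submodule.span ℝ
      {v | ∃ (j : Fin (k+1)) (m : Fin 2), m ≠ (⟨0, by omega⟩ : Fin 2) ∧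
        v = P j m - P j ⟨0, by omega⟩} ≤ H := by
    rw [Submodule.span_le]
    rintro v ⟨j, m, hm, rfl⟩
    have h0 : Hᗮ.orthogonalProjectionOnto (P j m - P j ⟨0, by omega⟩) = 0 := by
      rw [map_sub, hsame j m ⟨0, by omega⟩, sub_self]
    have hmem : P j m - P j ⟨0, by omega⟩ ∈ Hᗮᗮ := Submodule.orthogonalProjectionOnto_eq_zero_iff.mp h0
    rwa [Submodule.orthogonal_orthogonal] at hmem
  have hle := Submodule.finrank_mono hsub
  have := le_trans key hle
  omega
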